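/- (Expected interference power bound) Let I = ∑_{i=c+1}^∞ D_i^{-α} ρ_i, where π λ D_i^2 ~ Gamma(i, 1), each ρ_i is independent of D_i with E[ρ_i] = k, α > 2, and c > α/2 - 1 is an integer. Then E[I] ≤ (πλ)^{α/2} k (α/2 - 1)^{-1} (c+1)^{1-α/2} + (πλ)^{α/2} k ∑_{i=c+1}^{c+⌈α/2⌉} Γ(i - α/2)/Γ(i). In particular E[I] < ∞. -/

import Mathlib

open MeasureTheory ProbabilityTheory Real
open scoped ENNReal

/-- Wendel-type: `Γ(x+δ) ≤ Γ(x) x^δ` for `0 < x`, `δ ∈ [0,1]`. -/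
lemma gamma_add_le (x δ : ℝ) (hx : 0 < x) (hδ0 : 0 ≤ δ) (hδ1 : δ ≤ 1) :
    Real.Gamma (x + δ) ≤ Real.Gamma x * x ^ δ := by
  have h1 : (0:ℝ) < x + 1 := by linarith
  have hcomb : (1 - δ) • x + δ • (x + 1) = x + δ := by simp [smul_eq_mul]; ring
  have hcvx := Real.convexOn_log_Gamma.2 (Set.mem_Ioi.2 hx) (Set.mem_Ioi.2 h1)
    (by linarith : (0:ℝ) ≤ 1 - δ) hδ0 (by ring)
  rw [hcomb] at hcvx
  simp only [Function.comp_apply, smul_eq_mul] at hcvx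
  have hΓx : 0 < Real.Gamma x := Real.Gamma_pos_of_pos hx
  have hΓxδ : 0 < Real.Gamma (x + δ) := Real.Gamma_pos_of_pos (by linarith)
  have hΓ1 : Real.Gamma (x + 1) = x * Real.Gamma x := Real.Gamma_add_one hx.ne'
  calc Real.Gamma (x + δ) = Real.exp (Real.log (Real.Gamma (x + δ))) := (Real.exp_log hΓxδ).symm
    _ ≤ Real.exp ((1 - δ) * Real.log (Real.Gamma x) + δ * Real.log (Real.Gamma (x + 1))) :=
        Real.exp_le_exp.2 hcvx
    _ = Real.Gamma x * x ^ δ := by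
        rw [hΓ1, Real.log_mul hx.ne' hΓx.ne', Real.rpow_def_of_pos hx, ← Real.exp_log hΓx,
          ← Real.exp_add]
        rw [Real.exp_log hΓx]
        ring_nf

/-- `Γ(x+n) ≥ x^n Γ(x)` for `0 < x`. -/
lemma gamma_add_nat_ge (x : ℝ) (hx : 0 < x) (n : ℕ) :
    x ^ n * Real.Gamma x ≤ Real.Gamma (x + n) := by
  induction n with
  | zero => simp
  | succ n ih =>
      have hxn : (0:ℝ) < x + n := by positivity
      have hcast : x + ((n:ℕ)+1:ℕ) = (x + n) + 1 := by push_cast; ring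
      rw [hcast, Real.Gamma_add_one hxn.ne']
      calc x ^ (n+1) * Real.Gamma x = x * (x ^ n * Real.Gamma x) := by ring
        _ ≤ x * Real.Gamma (x + n) := by
            have := Real.Gamma_pos_of_pos hxn
            nlinarith [Real.Gamma_pos_of_pos hx, pow_pos hx n]
        _ ≤ (x + n) * Real.Gamma (x + n) := by
            have := Real.Gamma_pos_of_pos hxn
            nlinarith

/-- Telescoping tail bound:
`∑_{i=m}^{N} Γ(i-s)/Γ(i) ≤ (s-1)⁻¹ Γ(m-s)/Γ(m-1)` when `2 ≤ m`, `s < m`, `1 < s`. -/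
lemma gamma_tail_sum_le (s : ℝ) (hs : 1 < s) (m : ℕ) (hm2 : 2 ≤ m) (hms : s < m) (N : ℕ) :
    ∑ i ∈ Finset.Icc m N, Real.Gamma ((i:ℝ) - s) / Real.Gamma (i:ℝ) ≤
      (s - 1)⁻¹ * (Real.Gamma ((m:ℝ) - s) / Real.Gamma ((m:ℝ) - 1)) := by
  set B : ℕ → ℝ := fun i => Real.Gamma ((i:ℝ) - s) / Real.Gamma ((i:ℝ) - 1) with hB
  have hstep : ∀ i : ℕ, m ≤ i →
      (s - 1) * (Real.Gamma ((i:ℝ) - s) / Real.Gamma (i:ℝ)) = B i - B (i+1) := by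
    intro i hi
    have hi2 : (2:ℝ) ≤ (i:ℝ) := by exact_mod_cast hm2.trans hi
    have his : s < (i:ℝ) := lt_of_lt_of_le hms (by exact_mod_cast hi)
    have hΓi1 : 0 < Real.Gamma ((i:ℝ) - 1) := Real.Gamma_pos_of_pos (by linarith)
    have hΓi : Real.Gamma (i:ℝ) = ((i:ℝ) - 1) * Real.Gamma ((i:ℝ) - 1) := by
      have h := Real.Gamma_add_one (s := (i:ℝ) - 1) (by linarith)
      rwa [show (i:ℝ) - 1 + 1 = (i:ℝ) by ring] at h
    have hcast1 : ((i+1:ℕ):ℝ) - s = ((i:ℝ) - s) + 1 := by push_cast; ring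
    have hcast2 : ((i+1:ℕ):ℝ) - 1 = (i:ℝ) := by push_cast; ring
    simp only [hB]
    rw [hcast1, hcast2, Real.Gamma_add_one (s := (i:ℝ) - s) (by linarith), hΓi]
    have hb : Real.Gamma ((i:ℝ) - 1) ≠ 0 := hΓi1.ne'
    have hi1 : (i:ℝ) - 1 ≠ 0 := by linarith
    field_simp
    ring
  have hBnonneg : ∀ i : ℕ, m ≤ i → 0 ≤ B i := by
    intro i hi
    have his : s < (i:ℝ) := lt_of_lt_of_le hms (by exact_mod_cast hi)
    have hi2 : (2:ℝ) ≤ (i:ℝ) := by exact_mod_cast hm2.trans hi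
    exact div_nonneg (Real.Gamma_pos_of_pos (by linarith)).le
      (Real.Gamma_pos_of_pos (by linarith)).le
  have key : (s - 1) * ∑ i ∈ Finset.Icc m N, Real.Gamma ((i:ℝ) - s) / Real.Gamma (i:ℝ)
      ≤ B m := by
    rcases lt_or_ge N m with h | h
    · rw [Finset.Icc_eq_empty (by omega)]
      simpa using hBnonneg m le_rfl
    · have eq : ∀ M : ℕ, m ≤ M + 1 → (s - 1) *
          ∑ i ∈ Finset.Icc m M, Real.Gamma ((i:ℝ) - s) / Real.Gamma (i:ℝ) = B m - B (M+1) := by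
        intro M
        induction M with
        | zero =>
            intro h0
            have hm1 : m = 1 := by omega
            omega
        | succ M ih =>
            intro hM
            rcases Nat.lt_or_ge (M+1) m with h1 | h1
            · have hm : m = M + 2 := by omega
              subst hm
              rw [Finset.Icc_eq_empty (by omega), show M+1+1 = M+2 by omega]
              simp
            · rw [Finset.sum_Icc_succ_top h1, mul_add, ih (by omega), hstep (M+1) h1]
              ring
      rw [eq N (by omega)]
      have := hBnonneg (N+1) (by omega)
      linarith
  have hs1 : (0:ℝ) < s - 1 := by linarith
  calc ∑ i ∈ Finset.Icc m N, Real.Gamma ((i:ℝ) - s) / Real.Gamma (i:ℝ)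
      = (s-1)⁻¹ * ((s - 1) * ∑ i ∈ Finset.Icc m N, Real.Gamma ((i:ℝ) - s) / Real.Gamma (i:ℝ)) := by
        field_simp
    _ ≤ (s-1)⁻¹ * B m := mul_le_mul_of_nonneg_left key (inv_nonneg.2 hs1.le)

/-- The key deterministic bound on partial sums of `Γ(i-s)/Γ(i)`. -/
lemma key_real (s : ℝ) (hs : 1 < s) (c : ℕ) (hc : 1 ≤ c) (hcs : s - 1 < c) (N : ℕ) :
    ∑ j ∈ Finset.range N, Real.Gamma ((↑(c+1+j) : ℝ) - s) / Real.Gamma (↑(c+1+j) : ℝ) ≤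
      (s - 1)⁻¹ * ((c:ℝ) + 1) ^ (1 - s) +
      ∑ i ∈ Finset.Icc (c+1) (c + ⌈s⌉₊), Real.Gamma ((i:ℝ) - s) / Real.Gamma (i:ℝ) := by
  set g : ℕ → ℝ := fun i => Real.Gamma ((i:ℝ) - s) / Real.Gamma (i:ℝ) with hg
  have hgnonneg : ∀ i : ℕ, c + 1 ≤ i → 0 ≤ g i := by
    intro i hi
    have h1 : ((c:ℝ) + 1) ≤ (i:ℝ) := by exact_mod_cast hi
    have h0 : (0:ℝ) ≤ (c:ℝ) := Nat.cast_nonneg c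
    exact div_nonneg (Real.Gamma_pos_of_pos (by linarith)).le
      (Real.Gamma_pos_of_pos (by linarith)).le
  have hreindex : ∑ i ∈ Finset.Icc (c+1) (c+N), g i = ∑ j ∈ Finset.range N, g (c+1+j) := by
    rw [← Finset.Ico_add_one_right_eq_Icc, Finset.sum_Ico_eq_sum_range,
      show c + N + 1 - (c+1) = N by omega]
  set L := ⌈s⌉₊ with hL
  have hsL : s ≤ (L:ℝ) := Nat.le_ceil s
  have hLs : (L:ℝ) < s + 1 := by
    have := Nat.ceil_lt_add_one (by linarith : (0:ℝ) ≤ s)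
    exact_mod_cast this
  have hL2 : 2 ≤ L := by
    have h1 : (1:ℝ) < (L:ℝ) := lt_of_lt_of_le hs hsL
    have h2 : 1 < L := by exact_mod_cast h1
    omega
  have hs1 : (0:ℝ) < s - 1 := by linarith
  have hc1 : (0:ℝ) < (c:ℝ) + 1 := by positivity
  have hTnonneg : 0 ≤ (s - 1)⁻¹ * ((c:ℝ) + 1) ^ (1 - s) := by positivity
  have hmain : ∑ j ∈ Finset.range N,
      Real.Gamma ((↑(c+1+j) : ℝ) - s) / Real.Gamma (↑(c+1+j) : ℝ) = ∑ j ∈ Finset.range N, g (c+1+j) := rfl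
  rw [hmain, ← hreindex]
  rcases le_or_gt N L with hNL | hNL
  · -- the sum is contained in the head sum
    have hsub : Finset.Icc (c+1) (c+N) ⊆ Finset.Icc (c+1) (c+L) := by
      apply Finset.Icc_subset_Icc_right; omega
    have := Finset.sum_le_sum_of_subset_of_nonneg hsub
      (fun i hi _ => hgnonneg i (Finset.mem_Icc.mp hi).1)
    linarith
  · -- split the sum
    have hsplit : ∑ i ∈ Finset.Icc (c+1) (c+N), g i =
        (∑ i ∈ Finset.Icc (c+1) (c+L), g i) + ∑ i ∈ Finset.Icc (c+L+1) (c+N), g i := by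
      have e1 : ∀ a b : ℕ, Finset.Icc (a+1) b = Finset.Ioc a b := by
        intro a b; ext x; simp only [Finset.mem_Icc, Finset.mem_Ioc]; omega
      rw [e1, e1, e1]
      exact (Finset.sum_Ioc_consecutive _ (by omega) (by omega)).symm
    rw [hsplit]
    have htail : ∑ i ∈ Finset.Icc (c+L+1) (c+N), g i ≤
        (s - 1)⁻¹ * ((c:ℝ) + 1) ^ (1 - s) := by
      have hm2 : 2 ≤ c + L + 1 := by omega
      have hms : s < ((c+L+1 : ℕ):ℝ) := by push_cast; linarith
      have htel := gamma_tail_sum_le s hs (c+L+1) hm2 hms (c+N)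
      have hBbound : Real.Gamma (((c+L+1 : ℕ):ℝ) - s) / Real.Gamma (((c+L+1 : ℕ):ℝ) - 1) ≤
          ((c:ℝ) + 1) ^ (1 - s) := by
        have hδ0 : (0:ℝ) ≤ (L:ℝ) - s := by linarith
        have hδ1 : (L:ℝ) - s ≤ 1 := by linarith
        have hnum : Real.Gamma (((c+L+1 : ℕ):ℝ) - s) ≤
            Real.Gamma ((c:ℝ)+1) * ((c:ℝ)+1) ^ ((L:ℝ) - s) := by
          have := gamma_add_le ((c:ℝ)+1) ((L:ℝ) - s) hc1 hδ0 hδ1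
          have hcast : ((c+L+1 : ℕ):ℝ) - s = ((c:ℝ)+1) + ((L:ℝ) - s) := by push_cast; ring
          rw [hcast]; exact this
        have hden : ((c:ℝ)+1) ^ (L-1) * Real.Gamma ((c:ℝ)+1) ≤
            Real.Gamma (((c+L+1 : ℕ):ℝ) - 1) := by
          have := gamma_add_nat_ge ((c:ℝ)+1) hc1 (L-1)
          have hcast : ((c+L+1 : ℕ):ℝ) - 1 = ((c:ℝ)+1) + ((L-1 : ℕ):ℝ) := by
            push_cast [Nat.cast_sub (by omega : 1 ≤ L)]; ring
          rw [hcast]; exact this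
        have hΓc1 : 0 < Real.Gamma ((c:ℝ)+1) := Real.Gamma_pos_of_pos hc1
        have hpow : (0:ℝ) < ((c:ℝ)+1) ^ (L-1) := by positivity
        calc Real.Gamma (((c+L+1 : ℕ):ℝ) - s) / Real.Gamma (((c+L+1 : ℕ):ℝ) - 1)
            ≤ (Real.Gamma ((c:ℝ)+1) * ((c:ℝ)+1) ^ ((L:ℝ) - s)) /
              (((c:ℝ)+1) ^ (L-1) * Real.Gamma ((c:ℝ)+1)) := by
              apply div_le_div₀ (by positivity) hnum (by positivity) hden
          _ = ((c:ℝ)+1) ^ ((L:ℝ) - s) / ((c:ℝ)+1) ^ (L-1) := by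
              field_simp
          _ = ((c:ℝ) + 1) ^ (1 - s) := by
              rw [← Real.rpow_natCast ((c:ℝ)+1) (L-1), ← Real.rpow_sub hc1]
              congr 1
              push_cast [Nat.cast_sub (by omega : 1 ≤ L)]
              ring
      calc ∑ i ∈ Finset.Icc (c+L+1) (c+N), g i
          ≤ (s-1)⁻¹ * (Real.Gamma (((c+L+1:ℕ):ℝ) - s) / Real.Gamma (((c+L+1:ℕ):ℝ) - 1)) := htel
        _ ≤ (s - 1)⁻¹ * ((c:ℝ) + 1) ^ (1 - s) :=
            mul_le_mul_of_nonneg_left hBbound (inv_nonneg.2 hs1.le)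
    linarith

/-- Expected interference power bound: let `I = ∑_{i=c+1}^∞ D_i^{-α} ρ_i`, where the
`D_i` are the ordered PPP distances (so `E[D_i^{-α}] = (πλ)^{α/2} Γ(i-α/2)/Γ(i)`), each
`ρ_i` is independent of `D_i` with `E[ρ_i] = k`, `α > 2`, and `c > α/2 - 1`.  Then
`E[I] ≤ (πλ)^{α/2} k ((α/2-1)⁻¹ (c+1)^{1-α/2} + ∑_{i=c+1}^{c+⌈α/2⌉} Γ(i-α/2)/Γ(i))`;
in particular `E[I] < ∞`. -/
theorem expected_interference_bound {Ω : Type*} [MeasurableSpace Ω] (μ : Measure Ω)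
    [IsProbabilityMeasure μ] (lam α : ℝ) (hlam : 0 < lam) (hα : 2 < α)
    (k : ℕ) (hk : 1 ≤ k) (c : ℕ) (hc : 1 ≤ c) (hcα : (c : ℝ) > α / 2 - 1)
    (D ρ : ℕ → Ω → ℝ) (hDmeas : ∀ i, Measurable (D i)) (hρmeas : ∀ i, Measurable (ρ i))
    (hDpos : ∀ i ω, 0 < D i ω) (hρpos : ∀ i ω, 0 ≤ ρ i ω)
    (hDmom : ∀ i : ℕ, c + 1 ≤ i →
      ∫⁻ ω, ENNReal.ofReal ((D i ω) ^ (-α)) ∂μ =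
        ENNReal.ofReal ((Real.pi * lam) ^ (α / 2) *
          (Real.Gamma ((i : ℝ) - α / 2) / Real.Gamma (i : ℝ))))
    (hρmom : ∀ i : ℕ, ∫⁻ ω, ENNReal.ofReal (ρ i ω) ∂μ = (k : ℝ≥0∞))
    (hindep : ∀ i, IndepFun (D i) (ρ i) μ) :
    ∫⁻ ω, ∑' j : ℕ, ENNReal.ofReal ((D (c + 1 + j) ω) ^ (-α) * ρ (c + 1 + j) ω) ∂μ ≤
      ENNReal.ofReal ((Real.pi * lam) ^ (α / 2) * (k : ℝ) *
        ((α / 2 - 1)⁻¹ * ((c : ℝ) + 1) ^ (1 - α / 2) +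
          ∑ i ∈ Finset.Icc (c + 1) (c + ⌈α / 2⌉₊),
            Real.Gamma ((i : ℝ) - α / 2) / Real.Gamma (i : ℝ))) := by
  have hs : 1 < α / 2 := by linarith
  have hcs : α / 2 - 1 < (c : ℝ) := hcα
  have hA : (0:ℝ) < (Real.pi * lam) ^ (α / 2) := by
    have : (0:ℝ) < Real.pi * lam := mul_pos Real.pi_pos hlam
    positivity
  set A : ℝ := (Real.pi * lam) ^ (α / 2) with hAdef
  set g : ℕ → ℝ := fun i => Real.Gamma ((i:ℝ) - α / 2) / Real.Gamma (i:ℝ) with hgdef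
  have hgnonneg : ∀ i : ℕ, c + 1 ≤ i → 0 ≤ g i := by
    intro i hi
    have h1 : ((c:ℝ) + 1) ≤ (i:ℝ) := by exact_mod_cast hi
    have h0 : (0:ℝ) ≤ (c:ℝ) := Nat.cast_nonneg c
    exact div_nonneg (Real.Gamma_pos_of_pos (by linarith)).le
      (Real.Gamma_pos_of_pos (by linarith)).le
  -- measurability of each term
  have hmeas : ∀ i : ℕ, Measurable fun ω => ENNReal.ofReal ((D i ω) ^ (-α) * ρ i ω) := by
    intro i
    have := hDmeas i
    have := hρmeas i
    fun_prop
  rw [lintegral_tsum (fun j => (hmeas (c+1+j)).aemeasurable)]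
  -- value of each term
  have hterm : ∀ j : ℕ,
      ∫⁻ ω, ENNReal.ofReal ((D (c+1+j) ω) ^ (-α) * ρ (c+1+j) ω) ∂μ =
        ENNReal.ofReal (A * g (c+1+j) * (k:ℝ)) := by
    intro j
    set i := c + 1 + j with hi
    have hsplit : ∀ ω, ENNReal.ofReal ((D i ω) ^ (-α) * ρ i ω) =
        ENNReal.ofReal ((D i ω) ^ (-α)) * ENNReal.ofReal (ρ i ω) := fun ω =>
      ENNReal.ofReal_mul (Real.rpow_nonneg (hDpos i ω).le _)
    simp only [hsplit]
    have mφ : Measurable fun x : ℝ => ENNReal.ofReal (x ^ (-α)) := by fun_prop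
    have mψ : Measurable fun x : ℝ => ENNReal.ofReal x := ENNReal.measurable_ofReal
    have hIndep : IndepFun (fun ω => ENNReal.ofReal ((D i ω) ^ (-α)))
        (fun ω => ENNReal.ofReal (ρ i ω)) μ := (hindep i).comp mφ mψ
    have hkey := lintegral_mul_eq_lintegral_mul_lintegral_of_indepFun''
      (f := fun ω => ENNReal.ofReal (D i ω ^ (-α))) (g := fun ω => ENNReal.ofReal (ρ i ω))
      (μ := μ) (by have := hDmeas i; fun_prop) (by have := hρmeas i; fun_prop) hIndep
    rw [hkey, hDmom i (by omega), hρmom i]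
    have hgnn : 0 ≤ A * g i := mul_nonneg hA.le (hgnonneg i (by omega))
    rw [← ENNReal.ofReal_natCast k, ← ENNReal.ofReal_mul hgnn]
  simp only [hterm]
  -- bound the series by its partial sums
  rw [ENNReal.tsum_eq_iSup_sum]
  apply iSup_le
  intro F
  rw [← ENNReal.ofReal_sum_of_nonneg (fun j _ => by
    exact mul_nonneg (mul_nonneg hA.le (hgnonneg (c+1+j) (by omega))) (Nat.cast_nonneg k))]
  apply ENNReal.ofReal_le_ofReal
  set N := F.sup id + 1 with hN
  have hsubset : F ⊆ Finset.range N := by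
    intro j hj
    exact Finset.mem_range.2 (Nat.lt_succ_of_le (Finset.le_sup (f := id) hj))
  have h1 : ∑ j ∈ F, A * g (c+1+j) * (k:ℝ) ≤ ∑ j ∈ Finset.range N, A * g (c+1+j) * (k:ℝ) :=
    Finset.sum_le_sum_of_subset_of_nonneg hsubset (fun j _ _ =>
      mul_nonneg (mul_nonneg hA.le (hgnonneg (c+1+j) (by omega))) (Nat.cast_nonneg k))
  have h2 : ∑ j ∈ Finset.range N, A * g (c+1+j) * (k:ℝ) =
      A * (k:ℝ) * ∑ j ∈ Finset.range N, g (c+1+j) := by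
    rw [Finset.mul_sum]
    exact Finset.sum_congr rfl fun _ _ => by ring
  have h3 := key_real (α/2) hs c hc hcs N
  have h4 : A * (k:ℝ) * ∑ j ∈ Finset.range N, g (c+1+j) ≤
      A * (k:ℝ) * ((α / 2 - 1)⁻¹ * ((c : ℝ) + 1) ^ (1 - α / 2) +
        ∑ i ∈ Finset.Icc (c + 1) (c + ⌈α / 2⌉₊), g i) := by
    apply mul_le_mul_of_nonneg_left _ (mul_nonneg hA.le (Nat.cast_nonneg k))
    exact h3
  calc ∑ j ∈ F, A * g (c+1+j) * (k:ℝ) ≤ ∑ j ∈ Finset.range N, A * g (c+1+j) * (k:ℝ) := h1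
    _ = A * (k:ℝ) * ∑ j ∈ Finset.range N, g (c+1+j) := h2
    _ ≤ A * (k:ℝ) * ((α / 2 - 1)⁻¹ * ((c : ℝ) + 1) ^ (1 - α / 2) +
        ∑ i ∈ Finset.Icc (c + 1) (c + ⌈α / 2⌉₊), g i) := h4
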